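/- Let d ≥ 1, let ℓ : ℝ^d → ℝ be a linear functional, and for a nonempty compact convex set S ⊆ ℝ^d and u ∈ ℝ^d define V(S, u) = max{ ℓ(s) : s ∈ S and ⟨u, s⟩ = max_{s'∈S} ⟨u, s'⟩ }. Let M1, M2 be nonempty compact convex subsets of ℝ^d and suppose u_O ∈ ℝ^d satisfies V(M1, u_O) > V(M2, u_O). Then there exists a nonempty open set U ⊆ ℝ^d (in particular a set of positive Lebesgue measure) such that V(M1, u) > V(M2, u) for every u ∈ U. -/

import Mathlib

noncomputable section

/-- The learner's value when the optimizer with direction `u` picks its favourite point of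
`S`, ties broken in favour of the linear functional `ℓ`. -/
def Vgen {d : ℕ} (ℓ : EuclideanSpace ℝ (Fin d) →ₗ[ℝ] ℝ) (S : Set (EuclideanSpace ℝ (Fin d)))
    (u : EuclideanSpace ℝ (Fin d)) : ℝ :=
  sSup (ℓ '' {s ∈ S | ∀ s' ∈ S, (inner ℝ u s' : ℝ) ≤ (inner ℝ u s : ℝ)})

namespace StrictGapAux

variable {d : ℕ}

/-- The argmax face of `S` in direction `u`. -/
def Amax (S : Set (EuclideanSpace ℝ (Fin d))) (u : EuclideanSpace ℝ (Fin d)) :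
    Set (EuclideanSpace ℝ (Fin d)) :=
  {s ∈ S | ∀ s' ∈ S, (inner ℝ u s' : ℝ) ≤ (inner ℝ u s : ℝ)}

theorem Vgen_eq (ℓ : EuclideanSpace ℝ (Fin d) →ₗ[ℝ] ℝ) (S : Set (EuclideanSpace ℝ (Fin d)))
    (u : EuclideanSpace ℝ (Fin d)) : Vgen ℓ S u = sSup (ℓ '' Amax S u) := rfl

/-- The support function. -/
def hsup (S : Set (EuclideanSpace ℝ (Fin d))) (u : EuclideanSpace ℝ (Fin d)) : ℝ :=
  sSup ((fun s => (inner ℝ u s : ℝ)) '' S)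

theorem cont_inner (u : EuclideanSpace ℝ (Fin d)) :
    Continuous fun s : EuclideanSpace ℝ (Fin d) => (inner ℝ u s : ℝ) :=
  continuous_const.inner continuous_id

variable {S : Set (EuclideanSpace ℝ (Fin d))} {u : EuclideanSpace ℝ (Fin d)}

theorem Amax_nonempty (hc : IsCompact S) (hne : S.Nonempty) : (Amax S u).Nonempty := by
  obtain ⟨s, hs, hmax⟩ := hc.exists_isMaxOn hne (cont_inner u).continuousOn
  exact ⟨s, hs, fun s' hs' => hmax hs'⟩

theorem Amax_isCompact (hc : IsCompact S) : IsCompact (Amax S u) := by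
  have : Amax S u = S ∩ ⋂ s' ∈ S, {s | (inner ℝ u s' : ℝ) ≤ (inner ℝ u s : ℝ)} := by
    ext s; simp [Amax, Set.mem_iInter]
  rw [this]
  exact hc.inter_right (isClosed_biInter fun s' _ =>
    isClosed_le continuous_const (cont_inner u))

theorem le_hsup (hc : IsCompact S) (hs : s₀ ∈ S) : (inner ℝ u s₀ : ℝ) ≤ hsup S u :=
  le_csSup (hc.image (cont_inner u)).bddAbove (Set.mem_image_of_mem _ hs)

theorem hsup_le (hne : S.Nonempty) {c : ℝ} (h : ∀ s ∈ S, (inner ℝ u s : ℝ) ≤ c) :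
    hsup S u ≤ c :=
  csSup_le (hne.image _) (by rintro _ ⟨s, hs, rfl⟩; exact h s hs)

theorem hsup_eq_of_mem_Amax (hc : IsCompact S) (hs : s₀ ∈ Amax S u) :
    hsup S u = (inner ℝ u s₀ : ℝ) :=
  le_antisymm (hsup_le ⟨s₀, hs.1⟩ hs.2) (le_hsup hc hs.1)

theorem le_Vgen (ℓ : EuclideanSpace ℝ (Fin d) →ₗ[ℝ] ℝ) (hℓ : Continuous ℓ)
    (hc : IsCompact S) (hs : s₀ ∈ Amax S u) : ℓ s₀ ≤ Vgen ℓ S u :=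
  le_csSup ((Amax_isCompact hc).image hℓ).bddAbove (Set.mem_image_of_mem _ hs)

theorem Vgen_le (ℓ : EuclideanSpace ℝ (Fin d) →ₗ[ℝ] ℝ) (hc : IsCompact S) (hne : S.Nonempty)
    {c : ℝ} (h : ∀ s ∈ Amax S u, ℓ s ≤ c) : Vgen ℓ S u ≤ c :=
  csSup_le ((Amax_nonempty hc hne).image _) (by rintro _ ⟨s, hs, rfl⟩; exact h s hs)

variable {ℓ : EuclideanSpace ℝ (Fin d) →ₗ[ℝ] ℝ} {v : EuclideanSpace ℝ (Fin d)}

/-- Key inequality 1: `t * Vgen ≤ h(u + t v) - h(u)` for `t > 0`. -/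
theorem key1 (hv : ∀ x, (inner ℝ v x : ℝ) = ℓ x) (hc : IsCompact S) (hne : S.Nonempty)
    {t : ℝ} (ht : 0 < t) (u : EuclideanSpace ℝ (Fin d)) :
    Vgen ℓ S u * t ≤ hsup S (u + t • v) - hsup S u := by
  rw [← le_div_iff₀ ht]
  apply Vgen_le ℓ hc hne
  intro s hs
  rw [le_div_iff₀ ht]
  have h1 : (inner ℝ (u + t • v) s : ℝ) ≤ hsup S (u + t • v) := le_hsup hc hs.1
  have h2 : (inner ℝ (u + t • v) s : ℝ) = hsup S u + t * ℓ s := by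
    rw [inner_add_left, real_inner_smul_left, hv, hsup_eq_of_mem_Amax hc hs]
  linarith [h1, h2.symm.le]

/-- Key inequality 2: `h(u) - h(u - t v) ≤ t * Vgen` for `t > 0`. -/
theorem key2 (hv : ∀ x, (inner ℝ v x : ℝ) = ℓ x) (hℓ : Continuous ℓ)
    (hc : IsCompact S) (hne : S.Nonempty) {t : ℝ} (ht : 0 < t)
    (u : EuclideanSpace ℝ (Fin d)) :
    hsup S u - hsup S (u - t • v) ≤ t * Vgen ℓ S u := by
  obtain ⟨s, hs⟩ := Amax_nonempty (u := u) hc hne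
  have h1 : (inner ℝ (u - t • v) s : ℝ) ≤ hsup S (u - t • v) := le_hsup hc hs.1
  have h2 : (inner ℝ (u - t • v) s : ℝ) = hsup S u - t * ℓ s := by
    rw [inner_sub_left, real_inner_smul_left, hv, hsup_eq_of_mem_Amax hc hs]
  have h3 : ℓ s ≤ Vgen ℓ S u := le_Vgen ℓ hℓ hc hs
  nlinarith

/-- Key limit fact: right difference quotients of the support function eventually dip
below any `c > Vgen`. -/
theorem key3 (hv : ∀ x, (inner ℝ v x : ℝ) = ℓ x) (hℓ : Continuous ℓ)
    (hc : IsCompact S) (hne : S.Nonempty) (uO : EuclideanSpace ℝ (Fin d)) {c : ℝ}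
    (hcgt : Vgen ℓ S uO < c) :
    ∃ t : ℝ, 0 < t ∧ hsup S (uO + t • v) - hsup S uO < t * c := by
  by_contra hcon
  push_neg at hcon
  set tn : ℕ → ℝ := fun n => 1 / (n + 1) with htn
  have htpos : ∀ n : ℕ, 0 < tn n := fun n => Nat.one_div_pos_of_nat
  -- choose maximizers for the perturbed directions
  have hchoice : ∀ n : ℕ, ∃ s, s ∈ Amax S (uO + tn n • v) :=
    fun n => Amax_nonempty hc hne
  choose sn hsn using hchoice
  obtain ⟨s, hsS, φ, hφ, hlim⟩ := hc.tendsto_subseq (fun n => (hsn n).1)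
  have htlim : Filter.Tendsto (fun n => tn (φ n)) Filter.atTop (nhds 0) := by
    have h0 : Filter.Tendsto tn Filter.atTop (nhds 0) := tendsto_one_div_add_atTop_nhds_zero_nat
    exact h0.comp hφ.tendsto_atTop
  have hℓlim : Filter.Tendsto (fun n => ℓ (sn (φ n))) Filter.atTop (nhds (ℓ s)) :=
    (hℓ.tendsto s).comp hlim
  have hinlim : Filter.Tendsto (fun n => (inner ℝ uO (sn (φ n)) : ℝ)) Filter.atTop
      (nhds (inner ℝ uO s : ℝ)) := ((cont_inner uO).tendsto s).comp hlim
  -- basic inequalities for each n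
  have hbase : ∀ n : ℕ, hsup S uO + tn n * c ≤ (inner ℝ uO (sn n) : ℝ) + tn n * ℓ (sn n) := by
    intro n
    have h1 := hcon (tn n) (htpos n)
    have h2 : hsup S (uO + tn n • v) = (inner ℝ (uO + tn n • v) (sn n) : ℝ) :=
      hsup_eq_of_mem_Amax hc (hsn n)
    have h3 : (inner ℝ (uO + tn n • v) (sn n) : ℝ)
        = (inner ℝ uO (sn n) : ℝ) + tn n * ℓ (sn n) := by
      rw [inner_add_left, real_inner_smul_left, hv]
    linarith [h1, h2 ▸ h3]
  have hup : ∀ n : ℕ, (inner ℝ uO (sn n) : ℝ) ≤ hsup S uO := fun n => le_hsup hc (hsn n).1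
  -- limit: inner uO s ≥ hsup S uO
  have hin_ge : hsup S uO ≤ (inner ℝ uO s : ℝ) := by
    have h1 : Filter.Tendsto
        (fun n => hsup S uO + tn (φ n) * c - tn (φ n) * ℓ (sn (φ n)))
        Filter.atTop (nhds (hsup S uO + 0 * c - 0 * ℓ s)) := by
      exact ((tendsto_const_nhds.add (htlim.mul tendsto_const_nhds)).sub (htlim.mul hℓlim))
    have h2 : ∀ n : ℕ, hsup S uO + tn (φ n) * c - tn (φ n) * ℓ (sn (φ n))
        ≤ (inner ℝ uO (sn (φ n)) : ℝ) := fun n => by linarith [hbase (φ n)]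
    have := le_of_tendsto_of_tendsto' h1 hinlim h2
    simpa using this
  have hsA : s ∈ Amax S uO := ⟨hsS, fun s' hs' => le_trans (le_hsup hc hs') hin_ge⟩
  -- limit: ℓ s ≥ c
  have hℓ_ge : c ≤ ℓ s := by
    apply ge_of_tendsto hℓlim
    filter_upwards with n
    have h1 := hbase (φ n)
    have h2 := hup (φ n)
    have h3 := htpos (φ n)
    nlinarith
  have := le_Vgen ℓ hℓ hc hsA
  linarith

/-- Continuity of the support function of a compact nonempty set. -/
theorem hsup_continuous (hc : IsCompact S) (hne : S.Nonempty) :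
    Continuous fun u : EuclideanSpace ℝ (Fin d) => hsup S u := by
  obtain ⟨R, hR⟩ := hc.isBounded.exists_norm_le
  have key : ∀ u w : EuclideanSpace ℝ (Fin d), hsup S u - hsup S w ≤ R * ‖u - w‖ := by
    intro u w
    have : hsup S u ≤ hsup S w + R * ‖u - w‖ := by
      apply hsup_le hne
      intro s hs
      have h1 : (inner ℝ u s : ℝ) = (inner ℝ w s : ℝ) + (inner ℝ (u - w) s : ℝ) := by
        rw [inner_sub_left]; ring
      have h2 : (inner ℝ (u - w) s : ℝ) ≤ ‖u - w‖ * ‖s‖ := real_inner_le_norm _ _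
      have h3 : ‖u - w‖ * ‖s‖ ≤ ‖u - w‖ * R := by
        apply mul_le_mul_of_nonneg_left (hR s hs) (norm_nonneg _)
      have h4 : (inner ℝ w s : ℝ) ≤ hsup S w := le_hsup hc hs
      have : (inner ℝ u s : ℝ) ≤ hsup S w + ‖u - w‖ * R := by linarith
      linarith [this, mul_comm ‖u - w‖ R]
    linarith
  have hlip : LipschitzWith (Real.toNNReal R) fun u : EuclideanSpace ℝ (Fin d) => hsup S u := by
    apply LipschitzWith.of_dist_le_mul
    intro u w
    rw [Real.dist_eq, abs_sub_le_iff]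
    have hRle : R ≤ (Real.toNNReal R : ℝ) := Real.le_coe_toNNReal R
    constructor
    · calc hsup S u - hsup S w ≤ R * ‖u - w‖ := key u w
        _ ≤ (Real.toNNReal R : ℝ) * ‖u - w‖ :=
          mul_le_mul_of_nonneg_right hRle (norm_nonneg _)
        _ = (Real.toNNReal R : ℝ) * dist u w := by rw [dist_eq_norm]
    · calc hsup S w - hsup S u ≤ R * ‖w - u‖ := key w u
        _ ≤ (Real.toNNReal R : ℝ) * ‖w - u‖ :=
          mul_le_mul_of_nonneg_right hRle (norm_nonneg _)
        _ = (Real.toNNReal R : ℝ) * dist u w := by rw [dist_eq_norm, norm_sub_rev]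
  exact hlip.continuous

end StrictGapAux

open StrictGapAux in
/-- If `V(M1, u_O) > V(M2, u_O)` for some direction `u_O`, then the strict
inequality holds on a nonempty open (hence positive-measure) set of directions. -/
theorem strict_value_gap_on_open_set
    (d : ℕ) (hd : 1 ≤ d) (ℓ : EuclideanSpace ℝ (Fin d) →ₗ[ℝ] ℝ)
    (M1 M2 : Set (EuclideanSpace ℝ (Fin d)))
    (h1ne : M1.Nonempty) (h1c : IsCompact M1) (h1v : Convex ℝ M1)
    (h2ne : M2.Nonempty) (h2c : IsCompact M2) (h2v : Convex ℝ M2)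
    (uO : EuclideanSpace ℝ (Fin d)) (hgap : Vgen ℓ M2 uO < Vgen ℓ M1 uO) :
    ∃ U : Set (EuclideanSpace ℝ (Fin d)), IsOpen U ∧ U.Nonempty ∧
      ∀ u ∈ U, Vgen ℓ M2 u < Vgen ℓ M1 u := by
  classical
  have hℓc : Continuous ℓ := ℓ.continuous_of_finiteDimensional
  obtain ⟨v, hv⟩ : ∃ v : EuclideanSpace ℝ (Fin d), ∀ x, (inner ℝ v x : ℝ) = ℓ x := by
    refine ⟨(InnerProductSpace.toDual ℝ _).symm (LinearMap.toContinuousLinearMap ℓ),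
      fun x => ?_⟩
    rw [InnerProductSpace.toDual_symm_apply]
    exact congrFun (LinearMap.coe_toContinuousLinearMap' ℓ) x
  set V1 : ℝ := Vgen ℓ M1 uO with hV1
  -- Step 1: a small right difference quotient for M2 at uO
  obtain ⟨t1, ht1, hq1⟩ := key3 hv hℓc h2c h2ne uO hgap
  -- Step 2: split the interval: find 0 < t0 < t1 with a small quotient from t0 to t1
  have hcurve : Continuous fun t : ℝ => uO + t • v :=
    continuous_const.add (continuous_id.smul continuous_const)
  have hgcont : Continuous fun t : ℝ =>
      hsup M2 (uO + t1 • v) - hsup M2 (uO + t • v) - (t1 - t) * V1 := by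
    apply Continuous.sub
    · exact Continuous.sub continuous_const ((hsup_continuous h2c h2ne).comp hcurve)
    · exact (continuous_const.sub continuous_id).mul continuous_const
  have hg0 : hsup M2 (uO + t1 • v) - hsup M2 (uO + (0:ℝ) • v) - (t1 - 0) * V1 < 0 := by
    simp only [zero_smul, add_zero, sub_zero]
    linarith
  have hev : ∀ᶠ t in nhds (0 : ℝ),
      hsup M2 (uO + t1 • v) - hsup M2 (uO + t • v) - (t1 - t) * V1 < 0 :=
    hgcont.continuousAt.eventually_lt continuousAt_const hg0
  obtain ⟨ε, hε, hball⟩ := Metric.eventually_nhds_iff.mp hev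
  obtain ⟨t0, ht0, ht0lt, hgt0⟩ : ∃ t0 : ℝ, 0 < t0 ∧ t0 < t1 ∧
      hsup M2 (uO + t1 • v) - hsup M2 (uO + t0 • v) - (t1 - t0) * V1 < 0 := by
    refine ⟨min (ε / 2) (t1 / 2), lt_min (by linarith) (by linarith),
      lt_of_le_of_lt (min_le_right _ _) (by linarith), ?_⟩
    apply hball
    rw [Real.dist_eq, sub_zero, abs_of_pos (lt_min (by linarith) (by linarith))]
    exact lt_of_le_of_lt (min_le_left _ _) (by linarith)
  set s : ℝ := t1 - t0 with hsdef
  have hspos : 0 < s := by rw [hsdef]; linarith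
  set u1 : EuclideanSpace ℝ (Fin d) := uO + t0 • v with hu1
  have hvec1 : u1 + s • v = uO + t1 • v := by rw [hu1, hsdef]; module
  have hvec2 : u1 - t0 • v = uO := by rw [hu1]; module
  -- Step 3: the witness function and the open set
  set F : EuclideanSpace ℝ (Fin d) → ℝ := fun u =>
    (hsup M1 u - hsup M1 (u - t0 • v)) * s - (hsup M2 (u + s • v) - hsup M2 u) * t0 with hF
  have hFcont : Continuous F := by
    apply Continuous.sub
    · apply Continuous.mul _ continuous_const
      exact (hsup_continuous h1c h1ne).sub
        ((hsup_continuous h1c h1ne).comp (continuous_id.sub continuous_const))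
    · apply Continuous.mul _ continuous_const
      exact ((hsup_continuous h2c h2ne).comp (continuous_id.add continuous_const)).sub
        (hsup_continuous h2c h2ne)
  have hFu1 : 0 < F u1 := by
    have ha : V1 * t0 ≤ hsup M1 (uO + t0 • v) - hsup M1 uO := key1 hv h1c h1ne ht0 uO
    have hb : hsup M2 (u1 + s • v) - hsup M2 u1 < s * V1 := by
      rw [hvec1]
      linarith [hgt0]
    have hrw : hsup M1 u1 - hsup M1 (u1 - t0 • v) = hsup M1 (uO + t0 • v) - hsup M1 uO := by
      rw [hvec2, hu1]
    have h1 : V1 * t0 * s ≤ (hsup M1 (uO + t0 • v) - hsup M1 uO) * s :=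
      mul_le_mul_of_nonneg_right ha hspos.le
    have h2 : (hsup M2 (u1 + s • v) - hsup M2 u1) * t0 < s * V1 * t0 :=
      mul_lt_mul_of_pos_right hb ht0
    rw [hF]
    simp only
    rw [hrw]
    nlinarith [h1, h2]
  refine ⟨F ⁻¹' Set.Ioi 0, hFcont.isOpen_preimage _ isOpen_Ioi, ⟨u1, hFu1⟩, ?_⟩
  intro u hu
  have hFu : (0:ℝ) < F u := hu
  have hk1 : Vgen ℓ M2 u * s ≤ hsup M2 (u + s • v) - hsup M2 u :=
    key1 hv h2c h2ne hspos u
  have hk2 : hsup M1 u - hsup M1 (u - t0 • v) ≤ t0 * Vgen ℓ M1 u :=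
    key2 hv hℓc h1c h1ne ht0 u
  rw [hF] at hFu
  simp only at hFu
  have h1 : Vgen ℓ M2 u * s * t0 ≤ (hsup M2 (u + s • v) - hsup M2 u) * t0 :=
    mul_le_mul_of_nonneg_right hk1 ht0.le
  have h2 : (hsup M1 u - hsup M1 (u - t0 • v)) * s ≤ t0 * Vgen ℓ M1 u * s :=
    mul_le_mul_of_nonneg_right hk2 hspos.le
  have h3 : Vgen ℓ M2 u * (s * t0) < Vgen ℓ M1 u * (s * t0) := by nlinarith [h1, h2, hFu]
  have hst : 0 < s * t0 := mul_pos hspos ht0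
  exact lt_of_mul_lt_mul_right h3 hst.le
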